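/- Let n ≥ 2 and let I ⊂ R = K[x_1,…,x_n] be the monomial ideal generated by the monomials x_1^{r_{1,1}}⋯x_n^{r_{1,n}}, …, x_1^{r_{k,1}}⋯x_n^{r_{k,n}}, where r ∈ ℕ^{k×n}. Suppose there exist indices 1 ≤ i ≠ j ≤ n such that r_{1,i} ≥ r_{2,i} ≥ ⋯ ≥ r_{k,i} and r_{1,j} ≥ r_{2,j} ≥ ⋯ ≥ r_{k,j}. Then m = (x_1,…,x_n) ∉ Ass(R/I). -/

import Mathlib

open MvPolynomial

/-- Let `n ≥ 2` and let `I ⊂ R = K[x_1,…,x_n]` be the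
monomial ideal generated by the monomials `x_1^{r_{a,1}} ⋯ x_n^{r_{a,n}}` for
`a = 1,…,k`.  If there exist indices `i ≠ j` such that the exponent sequences
`r_{1,i} ≥ r_{2,i} ≥ ⋯ ≥ r_{k,i}` and `r_{1,j} ≥ r_{2,j} ≥ ⋯ ≥ r_{k,j}` are
both non-increasing, then `m = (x_1,…,x_n) ∉ Ass (R / I)`. -/
theorem maximal_not_associated_of_two_antitone_columns
    {K : Type*} [Field K] {n k : ℕ} (hn : 2 ≤ n)
    (r : Fin k → Fin n → ℕ)
    (i j : Fin n) (hij : i ≠ j)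
    (hi : ∀ a b : Fin k, a ≤ b → r b i ≤ r a i)
    (hj : ∀ a b : Fin k, a ≤ b → r b j ≤ r a j) :
    Ideal.span (Set.range (X : Fin n → MvPolynomial (Fin n) K)) ∉
      associatedPrimes (MvPolynomial (Fin n) K)
        (MvPolynomial (Fin n) K ⧸
          Ideal.span (Set.range fun a : Fin k =>
            MvPolynomial.monomial (Finsupp.equivFunOnFinite.symm (r a)) (1 : K))) := by
  set r' : Fin k → (Fin n →₀ ℕ) := fun a => Finsupp.equivFunOnFinite.symm (r a) with hr'
  set I : Ideal (MvPolynomial (Fin n) K) :=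
    Ideal.span (Set.range fun a : Fin k =>
      MvPolynomial.monomial (Finsupp.equivFunOnFinite.symm (r a)) (1 : K)) with hI
  have hIchar : ∀ p : MvPolynomial (Fin n) K, p ∈ I ↔
      ∀ u ∈ p.support, ∃ a : Fin k, r' a ≤ u := by
    intro p
    have : I = Ideal.span ((fun s => monomial s (1 : K)) '' Set.range r') := by
      rw [hI, ← Set.range_comp]; rfl
    rw [this, mem_ideal_span_monomial_image]
    simp [Set.mem_range]
  intro hmem
  obtain ⟨hprime, x, hx⟩ := isAssociatedPrime_iff.mp hmem
  obtain ⟨f, rfl⟩ := Ideal.Quotient.mk_surjective x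
  -- X i * f ∈ I and X j * f ∈ I
  have hmul : ∀ l : Fin n, X l * f ∈ I := by
    intro l
    have hXl : X l ∈ Ideal.span (Set.range (X : Fin n → MvPolynomial (Fin n) K)) :=
      Ideal.subset_span ⟨l, rfl⟩
    rw [hx, Submodule.mem_colon_singleton, Submodule.mem_bot] at hXl
    have h0 : Ideal.Quotient.mk I (X l * f) = 0 := by
      rw [← smul_eq_mul, ← Ideal.Quotient.mk_eq_mk, Submodule.Quotient.mk_smul, Ideal.Quotient.mk_eq_mk, hXl]
    rwa [Ideal.Quotient.eq_zero_iff_mem] at h0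
  -- hence f ∈ I
  have hfI : f ∈ I := by
    rw [hIchar]
    intro u hu
    have hiu : ∃ a : Fin k, r' a ≤ Finsupp.single i 1 + u := by
      refine (hIchar _).mp (hmul i) _ ?_
      rw [mem_support_iff, coeff_X_mul]
      exact mem_support_iff.mp hu
    have hju : ∃ b : Fin k, r' b ≤ Finsupp.single j 1 + u := by
      refine (hIchar _).mp (hmul j) _ ?_
      rw [mem_support_iff, coeff_X_mul]
      exact mem_support_iff.mp hu
    obtain ⟨a, ha⟩ := hiu
    obtain ⟨b, hb⟩ := hju
    rw [Finsupp.le_def] at ha hb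
    have ha' : ∀ l, r a l ≤ (Finsupp.single i 1) l + u l := fun l => ha l
    have hb' : ∀ l, r b l ≤ (Finsupp.single j 1) l + u l := fun l => hb l
    have haj : r a j ≤ u j := by
      have := ha' j; rwa [Finsupp.single_apply, if_neg hij, zero_add] at this
    have hbi : r b i ≤ u i := by
      have := hb' i; rwa [Finsupp.single_apply, if_neg (Ne.symm hij), zero_add] at this
    by_cases hau : r' a ≤ u
    · exact ⟨a, hau⟩
    by_cases hbu : r' b ≤ u
    · exact ⟨b, hbu⟩
    exfalso
    -- r a i > u i and r b j > u j
    have hai : u i < r a i := by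
      by_contra h
      push_neg at h
      refine hau (Finsupp.le_def.mpr fun l => ?_)
      by_cases hl : l = i
      · subst hl; exact h
      · have := ha' l; rwa [Finsupp.single_apply, if_neg (Ne.symm hl), zero_add] at this
    have hbj : u j < r b j := by
      by_contra h
      push_neg at h
      refine hbu (Finsupp.le_def.mpr fun l => ?_)
      by_cases hl : l = j
      · subst hl; exact h
      · have := hb' l; rwa [Finsupp.single_apply, if_neg (Ne.symm hl), zero_add] at this
    rcases le_total a b with hab | hab
    · exact absurd (hj a b hab) (by omega)
    · exact absurd (hi b a hab) (by omega)
  -- contradiction: then annihilator is ⊤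
  have : Ideal.Quotient.mk I f = 0 := (Ideal.Quotient.eq_zero_iff_mem).mpr hfI
  rw [this] at hx
  have : Ideal.span (Set.range (X : Fin n → MvPolynomial (Fin n) K)) = ⊤ := by
    rw [hx]
    simp [Submodule.annihilator_eq_top_iff]
  exact hprime.ne_top this
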